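/- arXiv:1010.0588 — 4 statements merged into one kernel-verified Lean document; each statement's English description precedes it below -/
import Mathlib

section
/- For a(t) = t^α with 0 < α ≤ 1, the proper radius of the Fermi space slice M_τ of τ-simultaneous events is ρ_{M_τ} = τ·√π·Γ(1/(2α)+1/2)/(2α·Γ(1/(2α)+1)) for every τ > 0; in particular ρ_{M_τ} is a linear function of the Fermi observer's proper time τ. -/
open Real MeasureTheory Filter Set

lemma real_beta (u v : ℝ) (hu : 0 < u) (hv : 0 < v) :
    ∫ x in (0:ℝ)..1, x ^ (u - 1) * (1 - x) ^ (v - 1) =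
      Real.Gamma u * Real.Gamma v / Real.Gamma (u + v) := by
  have h := Complex.Gamma_mul_Gamma_eq_betaIntegral (s := (u : ℂ)) (t := (v : ℂ))
    (by simpa using hu) (by simpa using hv)
  have hbeta : Complex.betaIntegral (u : ℂ) (v : ℂ) =
      ((∫ x in (0:ℝ)..1, x ^ (u - 1) * (1 - x) ^ (v - 1) : ℝ) : ℂ) := by
    rw [Complex.betaIntegral, ← intervalIntegral.integral_ofReal]
    refine intervalIntegral.integral_congr fun x hx => ?_
    rw [Set.uIcc_of_le zero_le_one] at hx
    push_cast
    rw [Complex.ofReal_cpow hx.1, Complex.ofReal_cpow (by linarith [hx.2] : (0:ℝ) ≤ 1 - x)]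
    push_cast
    ring
  rw [hbeta, show ((u:ℂ) + (v:ℂ)) = ((u + v : ℝ) : ℂ) by push_cast; ring,
    Complex.Gamma_ofReal, Complex.Gamma_ofReal, Complex.Gamma_ofReal,
    ← Complex.ofReal_mul, ← Complex.ofReal_mul] at h
  have h' := Complex.ofReal_injective h
  have hG : Real.Gamma (u + v) ≠ 0 := (Real.Gamma_pos_of_pos (by linarith)).ne'
  field_simp
  linarith [h']

lemma inv_image_Ioo : (fun x : ℝ => x⁻¹) '' Set.Ioo 0 1 = Set.Ioi 1 := by
  ext y
  constructor
  · rintro ⟨x, ⟨hx0, hx1⟩, rfl⟩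
    exact (one_lt_inv_iff₀).mpr ⟨hx0, hx1⟩
  · intro hy
    have hy1 : (1:ℝ) < y := hy
    exact ⟨y⁻¹, ⟨inv_pos.mpr (by linarith), inv_lt_one_of_one_lt₀ hy1⟩, inv_inv y⟩

lemma key_integral (p : ℝ) (hp : 0 < p) :
    ∫ s in Set.Ioi (1:ℝ), s ^ (-p - 1) * (s - 1) ^ (-(1/2) : ℝ) =
      Real.Gamma (p + 1/2) * Real.sqrt π / Real.Gamma (p + 1) := by
  have hsub := integral_image_eq_integral_abs_deriv_smul (s := Set.Ioo (0:ℝ) 1) (f := fun x : ℝ => x⁻¹)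
      (f' := fun x : ℝ => -(x ^ 2)⁻¹) measurableSet_Ioo
      (fun x hx => (hasDerivAt_inv (ne_of_gt hx.1)).hasDerivWithinAt)
      (fun a _ b _ hab => inv_injective hab)
      (fun s => s ^ (-p - 1) * (s - 1) ^ (-(1/2) : ℝ))
  rw [inv_image_Ioo] at hsub
  rw [hsub]
  have hcongr : ∫ x in Set.Ioo (0:ℝ) 1,
      |-(x ^ 2)⁻¹| • ((x⁻¹) ^ (-p - 1) * (x⁻¹ - 1) ^ (-(1/2) : ℝ)) =
      ∫ x in Set.Ioo (0:ℝ) 1, x ^ (p + 1/2 - 1) * (1 - x) ^ ((1:ℝ)/2 - 1) := by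
    refine setIntegral_congr_fun measurableSet_Ioo fun x hx => ?_
    obtain ⟨hx0, hx1⟩ := hx
    have h1x : (0:ℝ) < 1 - x := by linarith
    rw [smul_eq_mul, abs_neg, abs_inv, abs_of_nonneg (sq_nonneg x)]
    have e1 : x⁻¹ - 1 = (1 - x) / x := by field_simp
    have e2 : (x⁻¹) ^ (-p - 1) = x ^ (p + 1) := by
      rw [Real.inv_rpow hx0.le, ← Real.rpow_neg hx0.le]
      congr 1
      ring
    have e3 : ((1 - x) / x) ^ (-(1/2) : ℝ) = (1 - x) ^ (-(1/2) : ℝ) * x ^ ((1:ℝ)/2) := by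
      rw [Real.div_rpow h1x.le hx0.le, div_eq_mul_inv, ← Real.rpow_neg hx0.le]
      norm_num
    have e4 : (x ^ 2)⁻¹ = x ^ (-2 : ℝ) := by
      rw [← Real.rpow_natCast x 2, ← Real.rpow_neg hx0.le]
      norm_num
    rw [e1, e2, e3, e4]
    rw [show x ^ (-2:ℝ) * (x ^ (p+1) * ((1-x) ^ (-(1/2):ℝ) * x ^ ((1:ℝ)/2))) =
      (x ^ (-2:ℝ) * x ^ (p+1) * x ^ ((1:ℝ)/2)) * (1-x) ^ (-(1/2):ℝ) by ring]
    rw [← Real.rpow_add hx0, ← Real.rpow_add hx0,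
      show (-2 + (p + 1) + (1:ℝ)/2 : ℝ) = p + 1/2 - 1 by ring,
      show ((1:ℝ)/2 - 1 : ℝ) = (-(1/2) : ℝ) by norm_num]
  rw [hcongr, ← integral_Ioc_eq_integral_Ioo,
    ← intervalIntegral.integral_of_le zero_le_one,
    real_beta (p + 1/2) (1/2) (by linarith) (by norm_num)]
  rw [Real.Gamma_one_half_eq]
  ring_nf

/-- for a(t) = t^α (0 < α ≤ 1), the proper radius of the Fermi space slice
M_τ equals τ·√π·Γ(1/(2α)+1/2)/(2α·Γ(1/(2α)+1)); in particular it is linear in τ. -/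
theorem fermi_slice_radius_power_law (α : ℝ) (hα0 : 0 < α) (hα1 : α ≤ 1) :
    ∀ τ : ℝ, 0 < τ →
      (τ ^ α / 2) *
          (∫ s in Set.Ioi (1:ℝ),
            deriv (fun t : ℝ => t ^ (1 / α)) (τ ^ α / Real.sqrt s) /
              (s * Real.sqrt s * Real.sqrt (s - 1))) =
        τ * (Real.sqrt π * Real.Gamma (1 / (2 * α) + 1 / 2) /
          (2 * α * Real.Gamma (1 / (2 * α) + 1))) := by
  intro τ hτ
  set p : ℝ := 1 / (2 * α) with hp_def
  have hp : 0 < p := by positivity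
  have hτα : (0:ℝ) < τ ^ α := Real.rpow_pos_of_pos hτ α
  have hcongr : ∫ s in Set.Ioi (1:ℝ),
      deriv (fun t : ℝ => t ^ (1 / α)) (τ ^ α / Real.sqrt s) /
        (s * Real.sqrt s * Real.sqrt (s - 1)) =
      ∫ s in Set.Ioi (1:ℝ),
        ((1 / α) * τ ^ (1 - α)) * (s ^ (-p - 1) * (s - 1) ^ (-(1/2) : ℝ)) := by
    refine setIntegral_congr_fun measurableSet_Ioi fun s hs => ?_
    have hs1 : (1:ℝ) < s := hs
    have hs0 : (0:ℝ) < s := by linarith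
    have hs10 : (0:ℝ) < s - 1 := by linarith
    have hss : (0:ℝ) < Real.sqrt s := Real.sqrt_pos.mpr hs0
    have hy : (0:ℝ) < τ ^ α / Real.sqrt s := div_pos hτα hss
    have hderiv : deriv (fun t : ℝ => t ^ (1 / α)) (τ ^ α / Real.sqrt s) =
        (1 / α) * (τ ^ α / Real.sqrt s) ^ (1 / α - 1) := by
      rw [Real.deriv_rpow_const]
    have eτ : (τ ^ α) ^ (1 / α - 1) = τ ^ (1 - α) := by
      rw [← Real.rpow_mul hτ.le, mul_sub, mul_one_div, div_self hα0.ne', mul_one]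
    have es : (Real.sqrt s) ^ (1 / α - 1) = s ^ ((1 / α - 1) / 2) := by
      rw [Real.sqrt_eq_rpow, ← Real.rpow_mul hs0.le]
      congr 1
      ring
    have hA : (0:ℝ) < s ^ ((1 / α - 1) / 2) := Real.rpow_pos_of_pos hs0 _
    have hB : (0:ℝ) < s * Real.sqrt s := by positivity
    have hC : (0:ℝ) < Real.sqrt (s - 1) := Real.sqrt_pos.mpr hs10
    have hAB : s ^ ((1 / α - 1) / 2) * (s * Real.sqrt s) = s ^ (p + 1) := by
      rw [Real.sqrt_eq_rpow]
      nth_rewrite 2 [← Real.rpow_one s]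
      rw [← Real.rpow_add hs0, ← Real.rpow_add hs0]
      congr 1
      rw [hp_def]
      field_simp
      ring
    have hRn : s ^ (-p - 1) = (s ^ (p + 1))⁻¹ := by
      rw [show (-p - 1 : ℝ) = -(p + 1) by ring, Real.rpow_neg hs0.le]
    have hRn2 : (s - 1) ^ (-(1/2) : ℝ) = (Real.sqrt (s - 1))⁻¹ := by
      rw [Real.sqrt_eq_rpow, ← Real.rpow_neg hs10.le]
    rw [hderiv, Real.div_rpow hτα.le hss.le, eτ, es, hRn, hRn2, ← hAB]
    field_simp
  rw [hcongr, MeasureTheory.integral_const_mul, key_integral p hp]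
  have hττ : τ ^ α * τ ^ (1 - α) = τ := by
    rw [← Real.rpow_add hτ]
    norm_num
  have hG2 : Real.Gamma (p + 1) ≠ 0 := (Real.Gamma_pos_of_pos (by linarith)).ne'
  have step : τ ^ α / 2 * (1 / α * τ ^ (1 - α) *
      (Real.Gamma (p + 1/2) * Real.sqrt π / Real.Gamma (p + 1))) =
      (τ ^ α * τ ^ (1 - α)) *
        (Real.sqrt π * Real.Gamma (p + 1/2) / (2 * α * Real.Gamma (p + 1))) := by
    field_simp
  rw [step, hττ]
end

section
/- The function g(α) = √π·Γ(1/(2α)+1/2)/(2α·Γ(1/(2α)+1)) is monotone decreasing on (0,1], and g(α) → ∞ as α → 0⁺. Consequently, at any fixed proper time τ > 0, the proper radii ρ_{M_τ} = τ·g(α) of the Fermi space slices in Robertson–Walker spacetimes with scale factor a(t) = t^α decrease as α increases on (0,1], and ρ_{M_τ} → ∞ as α → 0⁺. -/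
open Real MeasureTheory Filter Set Topology

private lemma gamma_ratio_cross {x y : ℝ} (hx : 0 < x) (hxy : x < y) :
    Real.Gamma (x + 1/2) * Real.Gamma y ≤ Real.Gamma x * Real.Gamma (y + 1/2) := by
  have hy : 0 < y := hx.trans hxy
  have hD : (0:ℝ) < y - x + 1/2 := by linarith
  obtain ⟨t, ht_def⟩ : ∃ t : ℝ, t = (1/2) / (y - x + 1/2) := ⟨_, rfl⟩
  have htD : t * (y - x + 1/2) = 1/2 := by rw [ht_def]; exact div_mul_cancel₀ _ hD.ne'
  have ht0 : 0 < t := by rw [ht_def]; positivity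
  have ht1 : t < 1 := by rw [ht_def, div_lt_one hD]; linarith
  have hs0 : 0 ≤ 1 - t := by linarith
  have hc := Real.convexOn_log_Gamma
  have hmem1 : x ∈ Set.Ioi (0:ℝ) := hx
  have hmem2 : y + 1/2 ∈ Set.Ioi (0:ℝ) := by simp only [Set.mem_Ioi]; linarith
  have e1 : (1 - t) • x + t • (y + 1/2) = x + 1/2 := by
    simp only [smul_eq_mul]; nlinarith
  have e2 : t • x + (1 - t) • (y + 1/2) = y := by
    simp only [smul_eq_mul]; nlinarith
  have h1 := hc.2 hmem1 hmem2 hs0 ht0.le (by ring)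
  have h2 := hc.2 hmem1 hmem2 ht0.le hs0 (by ring)
  rw [e1] at h1
  rw [e2] at h2
  simp only [smul_eq_mul, Function.comp] at h1 h2
  have key : (1 - t) * Real.log (Real.Gamma x) + t * Real.log (Real.Gamma (y + 1/2)) +
      (t * Real.log (Real.Gamma x) + (1 - t) * Real.log (Real.Gamma (y + 1/2))) =
      Real.log (Real.Gamma x) + Real.log (Real.Gamma (y + 1/2)) := by ring
  have hsum : Real.log (Real.Gamma (x + 1/2)) + Real.log (Real.Gamma y) ≤
      Real.log (Real.Gamma x) + Real.log (Real.Gamma (y + 1/2)) := by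
    linarith [h1, h2, key]
  have p1 : 0 < Real.Gamma (x + 1/2) := Real.Gamma_pos_of_pos (by linarith)
  have p2 : 0 < Real.Gamma y := Real.Gamma_pos_of_pos hy
  have p3 : 0 < Real.Gamma x := Real.Gamma_pos_of_pos hx
  have p4 : 0 < Real.Gamma (y + 1/2) := Real.Gamma_pos_of_pos (by linarith)
  have := Real.exp_le_exp.mpr hsum
  rwa [Real.exp_add, Real.exp_add, Real.exp_log p1, Real.exp_log p2, Real.exp_log p3,
    Real.exp_log p4] at this

private lemma h_mono {x y : ℝ} (hx : 0 < x) (hxy : x ≤ y) :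
    Real.Gamma (x + 1/2) / Real.Gamma x ≤ Real.Gamma (y + 1/2) / Real.Gamma y := by
  rcases eq_or_lt_of_le hxy with rfl | hlt
  · exact le_rfl
  · have hy : 0 < y := hx.trans hlt
    have p2 : 0 < Real.Gamma y := Real.Gamma_pos_of_pos hy
    have p3 : 0 < Real.Gamma x := Real.Gamma_pos_of_pos hx
    rw [div_le_div_iff₀ p3 p2]
    exact (gamma_ratio_cross hx hlt).trans_eq (by ring)

private lemma h_lower {y : ℝ} (hy : 1/2 < y) :
    Real.sqrt (y - 1/2) ≤ Real.Gamma (y + 1/2) / Real.Gamma y := by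
  obtain ⟨x, hx_def⟩ : ∃ x : ℝ, x = y - 1/2 := ⟨_, rfl⟩
  have hx : 0 < x := by rw [hx_def]; linarith
  have hGx : 0 < Real.Gamma x := Real.Gamma_pos_of_pos hx
  have hGy : 0 < Real.Gamma y := Real.Gamma_pos_of_pos (by linarith)
  have hGy2 : 0 < Real.Gamma (y + 1/2) := Real.Gamma_pos_of_pos (by linarith)
  have hx12 : x + 1/2 = y := by rw [hx_def]; ring
  have hy12 : y + 1/2 = x + 1 := by rw [hx_def]; ring
  have hid : (Real.Gamma y / Real.Gamma x) * (Real.Gamma (y + 1/2) / Real.Gamma y) = x := by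
    rw [hy12, Real.Gamma_add_one hx.ne']
    field_simp
  have hmono := h_mono hx (by rw [hx_def]; linarith : x ≤ y)
  rw [hx12] at hmono
  have hq : 0 < Real.Gamma (y + 1/2) / Real.Gamma y := div_pos hGy2 hGy
  have hsq : x ≤ (Real.Gamma (y + 1/2) / Real.Gamma y) ^ 2 := by nlinarith
  rw [← hx_def]
  calc Real.sqrt x ≤ Real.sqrt ((Real.Gamma (y + 1/2) / Real.Gamma y) ^ 2) :=
        Real.sqrt_le_sqrt hsq
    _ = Real.Gamma (y + 1/2) / Real.Gamma y := by rw [Real.sqrt_sq hq.le]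
  -- goal uses x = y - 1/2

private lemma g_eq {α : ℝ} (hα : 0 < α) :
    Real.sqrt π * Real.Gamma (1 / (2 * α) + 1 / 2) /
      (2 * α * Real.Gamma (1 / (2 * α) + 1)) =
    Real.sqrt π * (Real.Gamma (1 / (2 * α) + 1/2) / Real.Gamma (1 / (2 * α))) := by
  have hx : (0:ℝ) < 1 / (2 * α) := by positivity
  rw [Real.Gamma_add_one hx.ne']
  have h2a : (2 * α) ≠ 0 := by positivity
  have hG : Real.Gamma (1 / (2 * α)) ≠ 0 := (Real.Gamma_pos_of_pos hx).ne'
  field_simp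

/-- g(α) = √π·Γ(1/(2α)+1/2)/(2α·Γ(1/(2α)+1)) is monotone decreasing on
(0,1] and tends to ∞ as α → 0⁺; consequently the proper radii ρ_{M_τ} = τ·g(α) decrease
in α and tend to ∞ as α → 0⁺, at any fixed τ > 0. -/
theorem fermi_slice_radius_antitone :
    AntitoneOn
      (fun α : ℝ =>
        Real.sqrt π * Real.Gamma (1 / (2 * α) + 1 / 2) /
          (2 * α * Real.Gamma (1 / (2 * α) + 1)))
      (Set.Ioc 0 1) ∧
    Tendsto
      (fun α : ℝ =>
        Real.sqrt π * Real.Gamma (1 / (2 * α) + 1 / 2) /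
          (2 * α * Real.Gamma (1 / (2 * α) + 1)))
      (nhdsWithin 0 (Set.Ioi 0)) atTop ∧
    (∀ τ : ℝ, 0 < τ →
      AntitoneOn
        (fun α : ℝ =>
          τ * (Real.sqrt π * Real.Gamma (1 / (2 * α) + 1 / 2) /
            (2 * α * Real.Gamma (1 / (2 * α) + 1))))
        (Set.Ioc 0 1) ∧
      Tendsto
        (fun α : ℝ =>
          τ * (Real.sqrt π * Real.Gamma (1 / (2 * α) + 1 / 2) /
            (2 * α * Real.Gamma (1 / (2 * α) + 1))))
        (nhdsWithin 0 (Set.Ioi 0)) atTop) := by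
  have hsqrtπ : 0 < Real.sqrt π := Real.sqrt_pos.mpr Real.pi_pos
  have hanti : AntitoneOn
      (fun α : ℝ =>
        Real.sqrt π * Real.Gamma (1 / (2 * α) + 1 / 2) /
          (2 * α * Real.Gamma (1 / (2 * α) + 1)))
      (Set.Ioc 0 1) := by
    intro a ha b hb hab
    simp only
    rw [g_eq ha.1, g_eq hb.1]
    have hxb : (0:ℝ) < 1 / (2 * b) := div_pos one_pos (by linarith [hb.1])
    have hxab : 1 / (2 * b) ≤ 1 / (2 * a) := by
      apply one_div_le_one_div_of_le (by linarith [ha.1]) (by linarith)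
    exact mul_le_mul_of_nonneg_left (h_mono hxb hxab) hsqrtπ.le
  have htend : Tendsto
      (fun α : ℝ =>
        Real.sqrt π * Real.Gamma (1 / (2 * α) + 1 / 2) /
          (2 * α * Real.Gamma (1 / (2 * α) + 1)))
      (nhdsWithin 0 (Set.Ioi 0)) atTop := by
    have hbase : Tendsto (fun α : ℝ => 1 / (2 * α)) (𝓝[>] (0:ℝ)) atTop := by
      have h2 : Tendsto (fun α : ℝ => 2 * α) (𝓝[>] (0:ℝ)) (𝓝[>] (0:ℝ)) := by
        apply tendsto_nhdsWithin_of_tendsto_nhds_of_eventually_within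
        · have hcont : Continuous (fun α : ℝ => 2 * α) := continuous_const.mul continuous_id
          have h0 : Tendsto (fun α : ℝ => 2 * α) (𝓝[>] (0:ℝ)) (𝓝 ((2:ℝ) * 0)) :=
            (hcont.tendsto (0:ℝ)).mono_left (nhdsWithin_le_nhds (s := Set.Ioi (0:ℝ)))
          simpa using h0
        · filter_upwards [self_mem_nhdsWithin] with a ha
          exact mul_pos two_pos (Set.mem_Ioi.mp ha)
      exact (tendsto_inv_nhdsGT_zero.comp h2).congr
        (fun α => by simp [Function.comp, one_div])
    have hH : Tendsto (fun y : ℝ => Real.sqrt π * (Real.Gamma (y + 1/2) / Real.Gamma y))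
        atTop atTop := by
      apply tendsto_atTop_mono' atTop
        (show ∀ᶠ y in atTop, Real.sqrt π * Real.sqrt (y - 1/2) ≤
          Real.sqrt π * (Real.Gamma (y + 1/2) / Real.Gamma y) from ?_) ?_
      · filter_upwards [eventually_gt_atTop (1/2 : ℝ)] with y hy
        exact mul_le_mul_of_nonneg_left (h_lower hy) hsqrtπ.le
      · apply Tendsto.const_mul_atTop hsqrtπ
        have hs : Tendsto Real.sqrt atTop atTop := by
          have hr := tendsto_rpow_atTop (show (0:ℝ) < 1/2 by norm_num)
          apply Tendsto.congr' _ hr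
          filter_upwards [eventually_ge_atTop (0:ℝ)] with x hx
          rw [Real.sqrt_eq_rpow]
        exact hs.comp (tendsto_atTop_add_const_right _ _ tendsto_id)
    have hc := hH.comp hbase
    apply hc.congr'
    filter_upwards [self_mem_nhdsWithin] with a (ha : 0 < a)
    exact (g_eq ha).symm
  refine ⟨hanti, htend, fun τ hτ => ⟨?_, ?_⟩⟩
  · intro a ha b hb hab
    exact mul_le_mul_of_nonneg_left (hanti ha hb hab) hτ.le
  · exact htend.const_mul_atTop hτ
end

section
/- For the Milne universe, a(t) = t (so b(t) = t, ḃ ≡ 1, σ∞(τ) = ∞), the following hold for all τ > 0 and σ ≥ 1: ρ_τ(σ) = τ·√((σ−1)/σ); χ(τ,σ) = artanh(√((σ−1)/σ)) = ln(√σ + √(σ−1)); t(τ,σ) = τ/√σ = √(τ² − ρ_τ(σ)²); the proper radius of the Fermi space slice is ρ_{M_τ} = τ = 1/H(τ), so the universal bound ρ_{M_τ} ≤ 1/H is attained; and the Fermi relative speed of a comoving particle is v_F(σ) = √((σ−1)/σ) = ρ_τ(σ)/τ, which is strictly less than the speed of light (= 1). -/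
open Real MeasureTheory Filter Set intervalIntegral

private lemma milne_sqrt_shift_int (σ : ℝ) :
    IntervalIntegrable (fun s : ℝ => (s - 1) ^ (-(1/2) : ℝ)) volume 1 σ := by
  have h := (intervalIntegral.intervalIntegrable_rpow' (a := 0) (b := σ - 1)
    (r := -(1/2)) (by norm_num)).comp_sub_right 1
  simpa using h

private lemma milne_int_aux1 (σ : ℝ) (hσ : 1 ≤ σ) :
    IntervalIntegrable (fun s : ℝ => 1 / (s * Real.sqrt s * Real.sqrt (s - 1))) volume 1 σ := by
  apply (milne_sqrt_shift_int σ).mono_fun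
  · exact (measurable_const.div (((measurable_id.mul Real.continuous_sqrt.measurable).mul
      (Real.continuous_sqrt.measurable.comp (measurable_id.sub measurable_const))))).aestronglyMeasurable
  · filter_upwards [ae_restrict_mem measurableSet_uIoc] with x hx
    rw [Set.uIoc_of_le hσ] at hx
    have hx1 : (1:ℝ) < x := hx.1
    have hx0 : (0:ℝ) < x := by linarith
    have hs1 : (0:ℝ) < Real.sqrt (x - 1) := Real.sqrt_pos.mpr (by linarith)
    have hsx : (1:ℝ) ≤ Real.sqrt x := by
      rw [show (1:ℝ) = Real.sqrt 1 by simp]; exact Real.sqrt_le_sqrt hx1.le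
    have hpos : 0 < x * Real.sqrt x * Real.sqrt (x - 1) := by positivity
    have h1 : ‖1 / (x * Real.sqrt x * Real.sqrt (x - 1))‖
        = 1 / (x * Real.sqrt x * Real.sqrt (x - 1)) := by
      rw [Real.norm_eq_abs, abs_of_pos (by positivity)]
    have h2 : ‖(x - 1) ^ (-(1/2) : ℝ)‖ = 1 / Real.sqrt (x - 1) := by
      rw [Real.norm_eq_abs, abs_of_pos (Real.rpow_pos_of_pos (by linarith) _),
        Real.rpow_neg (by linarith), Real.sqrt_eq_rpow, one_div]
      norm_num
    rw [h1, h2]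
    apply one_div_le_one_div_of_le hs1
    have hxs : 1 ≤ x * Real.sqrt x := by nlinarith
    calc Real.sqrt (x - 1) = 1 * Real.sqrt (x - 1) := by ring
      _ ≤ x * Real.sqrt x * Real.sqrt (x - 1) := mul_le_mul_of_nonneg_right hxs hs1.le

private lemma milne_int_aux2 (σ : ℝ) (hσ : 1 ≤ σ) :
    IntervalIntegrable (fun s : ℝ => 1 / (Real.sqrt s * Real.sqrt (s - 1))) volume 1 σ := by
  apply (milne_sqrt_shift_int σ).mono_fun
  · exact (measurable_const.div ((Real.continuous_sqrt.measurable.mul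
      (Real.continuous_sqrt.measurable.comp (measurable_id.sub measurable_const))))).aestronglyMeasurable
  · filter_upwards [ae_restrict_mem measurableSet_uIoc] with x hx
    rw [Set.uIoc_of_le hσ] at hx
    have hx1 : (1:ℝ) < x := hx.1
    have hs1 : (0:ℝ) < Real.sqrt (x - 1) := Real.sqrt_pos.mpr (by linarith)
    have hsx : (1:ℝ) ≤ Real.sqrt x := by
      rw [show (1:ℝ) = Real.sqrt 1 by simp]; exact Real.sqrt_le_sqrt hx1.le
    have h1 : ‖1 / (Real.sqrt x * Real.sqrt (x - 1))‖
        = 1 / (Real.sqrt x * Real.sqrt (x - 1)) := by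
      rw [Real.norm_eq_abs, abs_of_pos (by positivity)]
    have h2 : ‖(x - 1) ^ (-(1/2) : ℝ)‖ = 1 / Real.sqrt (x - 1) := by
      rw [Real.norm_eq_abs, abs_of_pos (Real.rpow_pos_of_pos (by linarith) _),
        Real.rpow_neg (by linarith), Real.sqrt_eq_rpow, one_div]
      norm_num
    rw [h1, h2]
    apply one_div_le_one_div_of_le hs1
    calc Real.sqrt (x - 1) = 1 * Real.sqrt (x - 1) := by ring
      _ ≤ Real.sqrt x * Real.sqrt (x - 1) := mul_le_mul_of_nonneg_right hsx hs1.le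

private lemma milne_integral1 (σ : ℝ) (hσ : 1 ≤ σ) :
    (∫ s in (1:ℝ)..σ, 1 / (s * Real.sqrt s * Real.sqrt (s - 1)))
      = 2 * Real.sqrt ((σ - 1) / σ) := by
  have key : ∫ s in (1:ℝ)..σ, 1 / (s * Real.sqrt s * Real.sqrt (s - 1))
      = (fun s : ℝ => 2 * Real.sqrt ((s - 1) / s)) σ
        - (fun s : ℝ => 2 * Real.sqrt ((s - 1) / s)) 1 := by
    apply intervalIntegral.integral_eq_sub_of_hasDerivAt_of_le hσ _ _ (milne_int_aux1 σ hσ)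
    · apply ContinuousOn.mul continuousOn_const
      apply ContinuousOn.sqrt
      exact ContinuousOn.div (by fun_prop) (by fun_prop)
        (fun x hx => ne_of_gt (lt_of_lt_of_le zero_lt_one hx.1))
    · intro x hx
      have hx0 : (0:ℝ) < x := lt_trans one_pos hx.1
      have hx1 : (0:ℝ) < x - 1 := by linarith [hx.1]
      have hinner : HasDerivAt (fun s : ℝ => (s - 1) / s) (1 / x ^ 2) x := by
        have := ((hasDerivAt_id x).sub_const 1).div (hasDerivAt_id x) (ne_of_gt hx0)
        refine this.congr_deriv ?_
        simp only [id]; ring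
      have hpos : (0:ℝ) < (x - 1) / x := div_pos hx1 hx0
      have hsq := hinner.sqrt (ne_of_gt hpos)
      have := hsq.const_mul 2
      refine this.congr_deriv ?_
      rw [Real.sqrt_div hx1.le]
      have hsx : Real.sqrt x * Real.sqrt x = x := Real.mul_self_sqrt hx0.le
      have hs1 : (0:ℝ) < Real.sqrt (x - 1) := Real.sqrt_pos.mpr hx1
      have hsx0 : (0:ℝ) < Real.sqrt x := Real.sqrt_pos.mpr hx0
      field_simp
      have hsx2 : Real.sqrt x ^ 2 = x := Real.sq_sqrt hx0.le
      linear_combination hsx2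
  rw [key]
  norm_num

private lemma milne_integral2 (σ : ℝ) (hσ : 1 ≤ σ) :
    (∫ s in (1:ℝ)..σ, 1 / (Real.sqrt s * Real.sqrt (s - 1)))
      = 2 * Real.log (Real.sqrt σ + Real.sqrt (σ - 1)) := by
  have key : ∫ s in (1:ℝ)..σ, 1 / (Real.sqrt s * Real.sqrt (s - 1))
      = (fun s : ℝ => 2 * Real.log (Real.sqrt s + Real.sqrt (s - 1))) σ
        - (fun s : ℝ => 2 * Real.log (Real.sqrt s + Real.sqrt (s - 1))) 1 := by
    apply intervalIntegral.integral_eq_sub_of_hasDerivAt_of_le hσ _ _ (milne_int_aux2 σ hσ)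
    · apply ContinuousOn.mul continuousOn_const
      apply ContinuousOn.log
      · fun_prop
      · intro x hx
        have h1 : (1:ℝ) ≤ Real.sqrt x := by
          rw [show (1:ℝ) = Real.sqrt 1 by simp]; exact Real.sqrt_le_sqrt hx.1
        have h2 : (0:ℝ) ≤ Real.sqrt (x - 1) := Real.sqrt_nonneg _
        positivity
    · intro x hx
      have hx0 : (0:ℝ) < x := lt_trans one_pos hx.1
      have hx1 : (0:ℝ) < x - 1 := by linarith [hx.1]
      have hsx0 : (0:ℝ) < Real.sqrt x := Real.sqrt_pos.mpr hx0
      have hs1 : (0:ℝ) < Real.sqrt (x - 1) := Real.sqrt_pos.mpr hx1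
      have hd1 : HasDerivAt (fun s : ℝ => Real.sqrt s) (1 / (2 * Real.sqrt x)) x :=
        Real.hasDerivAt_sqrt (ne_of_gt hx0)
      have hd2 : HasDerivAt (fun s : ℝ => Real.sqrt (s - 1)) (1 / (2 * Real.sqrt (x - 1))) x := by
        have := ((hasDerivAt_id x).sub_const 1).sqrt (ne_of_gt hx1)
        simpa using this
      have hsum := hd1.add hd2
      have hpos : (0:ℝ) < Real.sqrt x + Real.sqrt (x - 1) := by positivity
      have hlog := hsum.log (ne_of_gt hpos)
      have := hlog.const_mul 2
      refine this.congr_deriv ?_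
      simp only [Pi.add_apply]
      field_simp
      ring
  rw [key]
  norm_num

/-- the Milne universe a(t) = t (b = id, ḃ ≡ 1):
explicit formulas for ρ_τ(σ), χ(τ,σ), t(τ,σ), the proper radius ρ_{M_τ} = τ = 1/H(τ),
and the (necessarily subluminal) Fermi relative speed v_F(σ) = √((σ-1)/σ) = ρ_τ(σ)/τ. -/
theorem milne_universe (τ σ : ℝ) (hτ : 0 < τ) (hσ : 1 ≤ σ) :
    -- ρ_τ(σ) = τ·√((σ-1)/σ)
    (τ / 2) * (∫ s in (1:ℝ)..σ, 1 / (s * Real.sqrt s * Real.sqrt (s - 1))) =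
      τ * Real.sqrt ((σ - 1) / σ) ∧
    -- χ(τ,σ) = artanh(√((σ-1)/σ)) (artanh x = (1/2)·ln((1+x)/(1-x)))
    (1 / 2) * (∫ s in (1:ℝ)..σ, 1 / (Real.sqrt s * Real.sqrt (s - 1))) =
      (1 / 2) * Real.log ((1 + Real.sqrt ((σ - 1) / σ)) / (1 - Real.sqrt ((σ - 1) / σ))) ∧
    -- χ(τ,σ) = ln(√σ + √(σ-1))
    (1 / 2) * (∫ s in (1:ℝ)..σ, 1 / (Real.sqrt s * Real.sqrt (s - 1))) =
      Real.log (Real.sqrt σ + Real.sqrt (σ - 1)) ∧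
    -- t(τ,σ) = τ/√σ = √(τ² - ρ_τ(σ)²)
    τ / Real.sqrt σ = Real.sqrt (τ ^ 2 - (τ * Real.sqrt ((σ - 1) / σ)) ^ 2) ∧
    -- ρ_{M_τ} = lim_{σ→∞} ρ_τ(σ) = τ
    Tendsto (fun u : ℝ => (τ / 2) * ∫ s in (1:ℝ)..u, 1 / (s * Real.sqrt s * Real.sqrt (s - 1)))
      atTop (nhds τ) ∧
    -- τ = 1/H(τ), so the universal bound ρ_{M_τ} ≤ 1/H is attained
    τ = 1 / (deriv (fun x : ℝ => x) τ / τ) ∧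
    -- v_F(σ) = √((σ-1)/σ)
    (1 / 2) * (∫ s in (1:ℝ)..σ, 1 / (s * Real.sqrt s * Real.sqrt (s - 1))) =
      Real.sqrt ((σ - 1) / σ) ∧
    -- v_F(σ) = ρ_τ(σ)/τ
    Real.sqrt ((σ - 1) / σ) = τ * Real.sqrt ((σ - 1) / σ) / τ ∧
    -- v_F(σ) < 1 (strictly less than the speed of light)
    Real.sqrt ((σ - 1) / σ) < 1 := by
  have hσ0 : (0:ℝ) < σ := by linarith
  refine ⟨?_, ?_, ?_, ?_, ?_, ?_, ?_, ?_, ?_⟩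
  · rw [milne_integral1 σ hσ]; ring
  · set a := Real.sqrt σ with ha_def
    set b := Real.sqrt (σ - 1) with hb_def
    have ha : 0 < a := Real.sqrt_pos.mpr hσ0
    have hb : 0 ≤ b := Real.sqrt_nonneg _
    have ha2 : a ^ 2 = σ := Real.sq_sqrt hσ0.le
    have hb2 : b ^ 2 = σ - 1 := Real.sq_sqrt (by linarith)
    have hba : b < a := by
      rw [ha_def, hb_def]; exact Real.sqrt_lt_sqrt (by linarith) (by linarith)
    have hv : Real.sqrt ((σ - 1) / σ) = b / a := Real.sqrt_div (by linarith) σ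
    have hne : 1 - b / a ≠ 0 := by
      have : b / a < 1 := (div_lt_one ha).mpr hba
      linarith
    have key : (1 + b / a) / (1 - b / a) = (a + b) ^ 2 := by
      rw [div_eq_iff hne]
      field_simp
      linear_combination (-1:ℝ) * ha2 + hb2
    rw [milne_integral2 σ hσ, hv, key, Real.log_pow]
    push_cast
    ring
  · rw [milne_integral2 σ hσ]; ring
  · have hv2 : (Real.sqrt ((σ - 1) / σ)) ^ 2 = (σ - 1) / σ :=
      Real.sq_sqrt (div_nonneg (by linarith) hσ0.le)
    have h : τ ^ 2 - (τ * Real.sqrt ((σ - 1) / σ)) ^ 2 = τ ^ 2 / σ := by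
      rw [mul_pow, hv2]; field_simp; ring
    rw [h, Real.sqrt_div (sq_nonneg τ), Real.sqrt_sq hτ.le]
  · have h1 : Tendsto (fun u : ℝ => (u - 1) / u) atTop (nhds 1) := by
      have heq : (fun u : ℝ => 1 - 1 / u) =ᶠ[atTop] fun u : ℝ => (u - 1) / u := by
        filter_upwards [eventually_gt_atTop (0:ℝ)] with u hu
        field_simp
      have hz : Tendsto (fun u : ℝ => 1 / u) atTop (nhds 0) := by
        simpa [one_div] using (tendsto_inv_atTop_zero : Tendsto (fun u : ℝ => u⁻¹) atTop (nhds 0))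
      have h0 : Tendsto (fun u : ℝ => 1 - 1 / u) atTop (nhds (1 - 0)) :=
        tendsto_const_nhds.sub hz
      rw [sub_zero] at h0
      exact h0.congr' heq
    have h2 : Tendsto (fun u : ℝ => Real.sqrt ((u - 1) / u)) atTop (nhds 1) := by
      have := (Real.continuous_sqrt.tendsto 1).comp h1
      rwa [Real.sqrt_one] at this
    have h3 : Tendsto (fun u : ℝ => τ * Real.sqrt ((u - 1) / u)) atTop (nhds (τ * 1)) :=
      h2.const_mul τ
    rw [mul_one] at h3
    apply h3.congr'
    filter_upwards [eventually_ge_atTop (1:ℝ)] with u hu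
    rw [milne_integral1 u hu]
    ring
  · simp [deriv_id'']
  · rw [milne_integral1 σ hσ]; ring
  · field_simp
  · have h2 : (σ - 1) / σ < 1 := by rw [div_lt_one hσ0]; linarith
    simpa using Real.sqrt_lt_sqrt (div_nonneg (by linarith) hσ0.le) h2
end

section
/- For the de Sitter universe, a(t) = e^{H₀t} on (0,∞) with H₀ > 0 (so b(t) = (ln t)/H₀, a_inf = 1, σ∞(τ) = e^{2H₀τ}), the following hold for all τ > 0 and 1 ≤ σ < e^{2H₀τ}: ρ_τ(σ) = arccos(1/√σ)/H₀ (so H₀·ρ_τ(σ) < π/2); χ(τ,σ) = √(σ−1)/(H₀ e^{H₀τ}); t(τ,σ) = τ − (ln σ)/(2H₀). Moreover the Fermi-speed expression (ȧ(τ)/2)·[ ∫₁^{σ₀} ḃ(a(τ)/√σ)σ^{−3/2}(σ−1)^{−1/2} dσ + a(τ)∫₁^{σ₀} b̈(a(τ)/√σ)σ^{−2}(σ−1)^{−1/2} dσ − (a(τ)/σ₀)∫₁^{σ₀} b̈(a(τ)/√σ)σ^{−1}(σ−1)^{−1/2} dσ ] evaluates to v_F = √(σ₀−1)/σ₀ =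 x/(1+x²) with x = H₀ e^{H₀τ} χ(τ,σ₀); in particular v_F ≤ 1/2 for all σ₀, τ and H₀, i.e. comoving test particles recede from the Fermi observer at no more than half the speed of light. -/
open Real MeasureTheory Filter Set intervalIntegral

noncomputable section

lemma intA_integrable {σ : ℝ} (hσ : 1 ≤ σ) :
    IntervalIntegrable (fun s => 1 / Real.sqrt (s - 1)) volume 1 σ := by
  have h : IntervalIntegrable (fun s : ℝ => (s - 1) ^ (-(1/2) : ℝ)) volume 1 σ := by
    have := (intervalIntegrable_rpow' (a := 0) (b := σ - 1) (r := -(1/2)) (by norm_num)).comp_sub_right 1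
    simpa using this
  apply h.congr
  intro s hs
  rw [Set.uIoc_of_le hσ] at hs
  have h1 : (0:ℝ) < s - 1 := by linarith [hs.1]
  beta_reduce
  rw [Real.rpow_neg h1.le, ← Real.sqrt_eq_rpow, one_div]

lemma intB_integrable {σ : ℝ} (hσ : 1 ≤ σ) :
    IntervalIntegrable (fun s => 1 / (s * Real.sqrt (s - 1))) volume 1 σ := by
  apply (intA_integrable hσ).mono_fun
  · apply Measurable.aestronglyMeasurable
    apply Measurable.div measurable_const
    exact (measurable_id.mul ((Real.continuous_sqrt.comp (continuous_sub_right 1)).measurable))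
  · filter_upwards [MeasureTheory.ae_restrict_mem measurableSet_uIoc] with s hs
    rw [Set.uIoc_of_le hσ] at hs
    have hs1 : (1:ℝ) < s := hs.1
    have h1 : (0:ℝ) ≤ Real.sqrt (s - 1) := Real.sqrt_nonneg _
    have hpos : (0:ℝ) < Real.sqrt (s - 1) := Real.sqrt_pos.mpr (by linarith)
    simp only [Real.norm_eq_abs, abs_div, abs_one, abs_mul, abs_of_nonneg h1,
      abs_of_nonneg (by linarith : (0:ℝ) ≤ s)]
    exact one_div_le_one_div_of_le hpos (le_mul_of_one_le_left hpos.le hs1.le)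

lemma intA_val {σ : ℝ} (hσ : 1 ≤ σ) :
    ∫ s in (1:ℝ)..σ, 1 / Real.sqrt (s - 1) = 2 * Real.sqrt (σ - 1) := by
  have := integral_eq_sub_of_hasDeriv_right_of_le hσ
    (f := fun s => 2 * Real.sqrt (s - 1)) (f' := fun s => 1 / Real.sqrt (s - 1))
    ((continuous_const.mul (Real.continuous_sqrt.comp (continuous_sub_right 1))).continuousOn)
    (fun x hx => ?_) (intA_integrable hσ)
  · rw [this]; simp
  · have h1 : x - 1 ≠ 0 := by have := hx.1; intro h; linarith [sub_eq_zero.mp h]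
    have hs : HasDerivAt (fun s : ℝ => Real.sqrt (s - 1)) (1 / (2 * Real.sqrt (x - 1)) * 1) x :=
      (Real.hasDerivAt_sqrt h1).comp x ((hasDerivAt_id x).sub_const 1)
    have h2 : Real.sqrt (x - 1) ≠ 0 := Real.sqrt_ne_zero'.mpr (by linarith [hx.1])
    have := (hs.const_mul 2).hasDerivWithinAt (s := Set.Ioi x)
    convert this using 1
    field_simp

lemma intB_val {σ : ℝ} (hσ : 1 ≤ σ) :
    ∫ s in (1:ℝ)..σ, 1 / (s * Real.sqrt (s - 1)) = 2 * Real.arctan (Real.sqrt (σ - 1)) := by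
  have := integral_eq_sub_of_hasDeriv_right_of_le hσ
    (f := fun s => 2 * Real.arctan (Real.sqrt (s - 1)))
    (f' := fun s => 1 / (s * Real.sqrt (s - 1)))
    ((continuous_const.mul (Real.continuous_arctan.comp
      (Real.continuous_sqrt.comp (continuous_sub_right 1)))).continuousOn)
    (fun x hx => ?_) (intB_integrable hσ)
  · rw [this]; simp
  · have hx1 : (1:ℝ) < x := hx.1
    have h1 : x - 1 ≠ 0 := by intro h; linarith [sub_eq_zero.mp h]
    have hs : HasDerivAt (fun s : ℝ => Real.sqrt (s - 1)) (1 / (2 * Real.sqrt (x - 1)) * 1) x :=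
      (Real.hasDerivAt_sqrt h1).comp x ((hasDerivAt_id x).sub_const 1)
    have ha : HasDerivAt (fun s : ℝ => Real.arctan (Real.sqrt (s - 1)))
        (1 / (1 + Real.sqrt (x - 1) ^ 2) * (1 / (2 * Real.sqrt (x - 1)) * 1)) x :=
      (Real.hasDerivAt_arctan _).comp x hs
    have h2 : Real.sqrt (x - 1) ≠ 0 := Real.sqrt_ne_zero'.mpr (by linarith)
    have hxx : (0:ℝ) < x := by linarith
    have := (ha.const_mul 2).hasDerivWithinAt (s := Set.Ioi x)
    convert this using 1
    rw [Real.sq_sqrt (by linarith : (0:ℝ) ≤ x - 1)]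
    have hsq : Real.sqrt (x - 1) * Real.sqrt (x - 1) = x - 1 :=
      Real.mul_self_sqrt (by linarith)
    field_simp
    rw [show (1:ℝ) + (x - 1) = x by ring, div_self hxx.ne']

lemma deriv_logdiv (H₀ : ℝ) : deriv (fun t : ℝ => Real.log t / H₀) = fun x => x⁻¹ / H₀ := by
  funext x
  rw [deriv_div_const]
  simp [Real.deriv_log]

lemma deriv2_logdiv (H₀ : ℝ) :
    deriv (deriv (fun t : ℝ => Real.log t / H₀)) = fun x => -(x ^ 2)⁻¹ / H₀ := by
  rw [deriv_logdiv]
  funext x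
  rw [deriv_div_const, deriv_inv]

/-- the χ-integral -/
lemma J_chi {H₀ E σ : ℝ} (hH : 0 < H₀) (hE : 0 < E) (hσ : 1 ≤ σ) :
    (∫ s in (1:ℝ)..σ, deriv (fun t : ℝ => Real.log t / H₀) (E / Real.sqrt s) /
        (Real.sqrt s * Real.sqrt (s - 1))) = 2 * Real.sqrt (σ - 1) / (H₀ * E) := by
  have : (∫ s in (1:ℝ)..σ, deriv (fun t : ℝ => Real.log t / H₀) (E / Real.sqrt s) /
      (Real.sqrt s * Real.sqrt (s - 1)))
      = ∫ s in (1:ℝ)..σ, (1 / (H₀ * E)) * (1 / Real.sqrt (s - 1)) := by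
    apply intervalIntegral.integral_congr
    intro s hs
    rw [Set.uIcc_of_le hσ] at hs
    have hs1 : (1:ℝ) ≤ s := hs.1
    have hss : (0:ℝ) < Real.sqrt s := Real.sqrt_pos.mpr (by linarith)
    rw [deriv_logdiv]
    dsimp only
    rw [inv_div]
    rcases eq_or_lt_of_le hs1 with h | h
    · simp [← h]
    · have h2 : Real.sqrt (s - 1) ≠ 0 := ne_of_gt (Real.sqrt_pos.mpr (by linarith))
      field_simp
  rw [this, intervalIntegral.integral_const_mul, intA_val hσ]
  ring

/-- the ρ-integral -/
lemma J_rho {H₀ E σ : ℝ} (hH : 0 < H₀) (hE : 0 < E) (hσ : 1 ≤ σ) :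
    (∫ s in (1:ℝ)..σ, deriv (fun t : ℝ => Real.log t / H₀) (E / Real.sqrt s) /
        (s * Real.sqrt s * Real.sqrt (s - 1))) = 2 * Real.arctan (Real.sqrt (σ - 1)) / (H₀ * E) := by
  have : (∫ s in (1:ℝ)..σ, deriv (fun t : ℝ => Real.log t / H₀) (E / Real.sqrt s) /
      (s * Real.sqrt s * Real.sqrt (s - 1)))
      = ∫ s in (1:ℝ)..σ, (1 / (H₀ * E)) * (1 / (s * Real.sqrt (s - 1))) := by
    apply intervalIntegral.integral_congr
    intro s hs
    rw [Set.uIcc_of_le hσ] at hs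
    have hs1 : (1:ℝ) ≤ s := hs.1
    have hs0 : (0:ℝ) < s := by linarith
    have hss : (0:ℝ) < Real.sqrt s := Real.sqrt_pos.mpr hs0
    rw [deriv_logdiv]
    dsimp only
    rw [inv_div]
    rcases eq_or_lt_of_le hs1 with h | h
    · simp [← h]
    · have h2 : Real.sqrt (s - 1) ≠ 0 := ne_of_gt (Real.sqrt_pos.mpr (by linarith))
      field_simp
  rw [this, intervalIntegral.integral_const_mul, intB_val hσ]
  ring

/-- the first second-derivative integral (with σ²) -/
lemma J_dd2 {H₀ E σ : ℝ} (hH : 0 < H₀) (hE : 0 < E) (hσ : 1 ≤ σ) :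
    (∫ s in (1:ℝ)..σ, deriv (deriv (fun t : ℝ => Real.log t / H₀)) (E / Real.sqrt s) /
        (s ^ 2 * Real.sqrt (s - 1)))
      = -(2 * Real.arctan (Real.sqrt (σ - 1))) / (H₀ * E ^ 2) := by
  have : (∫ s in (1:ℝ)..σ, deriv (deriv (fun t : ℝ => Real.log t / H₀)) (E / Real.sqrt s) /
      (s ^ 2 * Real.sqrt (s - 1)))
      = ∫ s in (1:ℝ)..σ, (-(1 / (H₀ * E ^ 2))) * (1 / (s * Real.sqrt (s - 1))) := by
    apply intervalIntegral.integral_congr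
    intro s hs
    rw [Set.uIcc_of_le hσ] at hs
    have hs1 : (1:ℝ) ≤ s := hs.1
    have hs0 : (0:ℝ) < s := by linarith
    rw [deriv2_logdiv]
    dsimp only
    rw [div_pow, Real.sq_sqrt hs0.le, inv_div]
    rcases eq_or_lt_of_le hs1 with h | h
    · simp [← h]
    · have h2 : Real.sqrt (s - 1) ≠ 0 := ne_of_gt (Real.sqrt_pos.mpr (by linarith))
      field_simp
  rw [this, intervalIntegral.integral_const_mul, intB_val hσ]
  ring

/-- the second second-derivative integral (with σ) -/
lemma J_dd1 {H₀ E σ : ℝ} (hH : 0 < H₀) (hE : 0 < E) (hσ : 1 ≤ σ) :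
    (∫ s in (1:ℝ)..σ, deriv (deriv (fun t : ℝ => Real.log t / H₀)) (E / Real.sqrt s) /
        (s * Real.sqrt (s - 1)))
      = -(2 * Real.sqrt (σ - 1)) / (H₀ * E ^ 2) := by
  have : (∫ s in (1:ℝ)..σ, deriv (deriv (fun t : ℝ => Real.log t / H₀)) (E / Real.sqrt s) /
      (s * Real.sqrt (s - 1)))
      = ∫ s in (1:ℝ)..σ, (-(1 / (H₀ * E ^ 2))) * (1 / Real.sqrt (s - 1)) := by
    apply intervalIntegral.integral_congr
    intro s hs
    rw [Set.uIcc_of_le hσ] at hs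
    have hs1 : (1:ℝ) ≤ s := hs.1
    have hs0 : (0:ℝ) < s := by linarith
    rw [deriv2_logdiv]
    dsimp only
    rw [div_pow, Real.sq_sqrt hs0.le, inv_div]
    rcases eq_or_lt_of_le hs1 with h | h
    · simp [← h]
    · have h2 : Real.sqrt (s - 1) ≠ 0 := ne_of_gt (Real.sqrt_pos.mpr (by linarith))
      field_simp
  rw [this, intervalIntegral.integral_const_mul, intA_val hσ]
  ring

/-- Synchronous time along the orthogonal spacelike geodesic: t(τ,σ) = b(a(τ)/√σ). -/
def tF (a b : ℝ → ℝ) (τ σ : ℝ) : ℝ := b (a τ / Real.sqrt σ)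

/-- Comoving coordinate along the orthogonal spacelike geodesic:
χ(τ,σ) = (1/2)∫₁^σ ḃ(a(τ)/√s) s^{-1/2}(s-1)^{-1/2} ds. -/
def chiF (a b : ℝ → ℝ) (τ σ : ℝ) : ℝ :=
  (1 / 2) * ∫ s in (1:ℝ)..σ, deriv b (a τ / Real.sqrt s) / (Real.sqrt s * Real.sqrt (s - 1))

/-- Proper arc length along the orthogonal spacelike geodesic:
ρ_τ(σ) = (a(τ)/2)∫₁^σ ḃ(a(τ)/√s) s^{-3/2}(s-1)^{-1/2} ds. -/
def rhoF (a b : ℝ → ℝ) (τ σ : ℝ) : ℝ :=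
  (a τ / 2) *
    ∫ s in (1:ℝ)..σ, deriv b (a τ / Real.sqrt s) / (s * Real.sqrt s * Real.sqrt (s - 1))

/-- The general Fermi-speed expression of Theorem 4 (Eq. (40) of the paper). -/
def vFgen (a b : ℝ → ℝ) (τ σ₀ : ℝ) : ℝ :=
  (deriv a τ / 2) *
    ((∫ σ in (1:ℝ)..σ₀, deriv b (a τ / Real.sqrt σ) / (σ * Real.sqrt σ * Real.sqrt (σ - 1))) +
      a τ *
        (∫ σ in (1:ℝ)..σ₀, deriv (deriv b) (a τ / Real.sqrt σ) / (σ ^ 2 * Real.sqrt (σ - 1))) -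
      (a τ / σ₀) *
        (∫ σ in (1:ℝ)..σ₀, deriv (deriv b) (a τ / Real.sqrt σ) / (σ * Real.sqrt (σ - 1))))

/-- the de Sitter universe a(t) = e^{H₀t}, b(t) = (ln t)/H₀:
explicit formulas for ρ_τ(σ), χ(τ,σ), t(τ,σ) on 1 ≤ σ < e^{2H₀τ}, and the Fermi
relative speed v_F = √(σ-1)/σ = x/(1+x²) ≤ 1/2 with x = H₀e^{H₀τ}χ(τ,σ). -/
theorem deSitter_universe (H₀ : ℝ) (hH : 0 < H₀) (τ σ : ℝ) (hτ : 0 < τ)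
    (hσ1 : 1 ≤ σ) (hσ2 : σ < Real.exp (2 * H₀ * τ)) :
    -- ρ_τ(σ) = arccos(1/√σ)/H₀, so H₀·ρ_τ(σ) < π/2
    rhoF (fun t => Real.exp (H₀ * t)) (fun t => Real.log t / H₀) τ σ =
      Real.arccos (1 / Real.sqrt σ) / H₀ ∧
    H₀ * rhoF (fun t => Real.exp (H₀ * t)) (fun t => Real.log t / H₀) τ σ < π / 2 ∧
    -- χ(τ,σ) = √(σ-1)/(H₀e^{H₀τ})
    chiF (fun t => Real.exp (H₀ * t)) (fun t => Real.log t / H₀) τ σ =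
      Real.sqrt (σ - 1) / (H₀ * Real.exp (H₀ * τ)) ∧
    -- t(τ,σ) = τ - (ln σ)/(2H₀)
    tF (fun t => Real.exp (H₀ * t)) (fun t => Real.log t / H₀) τ σ =
      τ - Real.log σ / (2 * H₀) ∧
    -- the Fermi-speed expression evaluates to √(σ-1)/σ
    vFgen (fun t => Real.exp (H₀ * t)) (fun t => Real.log t / H₀) τ σ =
      Real.sqrt (σ - 1) / σ ∧
    -- = x/(1+x²) with x = H₀e^{H₀τ}·χ(τ,σ)
    Real.sqrt (σ - 1) / σ =
      (H₀ * Real.exp (H₀ * τ) *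
          chiF (fun t => Real.exp (H₀ * t)) (fun t => Real.log t / H₀) τ σ) /
        (1 + (H₀ * Real.exp (H₀ * τ) *
          chiF (fun t => Real.exp (H₀ * t)) (fun t => Real.log t / H₀) τ σ) ^ 2) ∧
    -- v_F ≤ 1/2: comoving particles recede at no more than half the speed of light
    vFgen (fun t => Real.exp (H₀ * t)) (fun t => Real.log t / H₀) τ σ ≤ 1 / 2 := by
  have hE : (0:ℝ) < Real.exp (H₀ * τ) := Real.exp_pos _
  have hσ0 : (0:ℝ) < σ := by linarith
  have hs10 : (0:ℝ) ≤ σ - 1 := by linarith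
  -- arccos = arctan identity
  have harctan : Real.arccos (1 / Real.sqrt σ) = Real.arctan (Real.sqrt (σ - 1)) := by
    have hs : (0:ℝ) < Real.sqrt σ := Real.sqrt_pos.mpr hσ0
    rw [Real.arccos_eq_arctan (by positivity)]
    congr 1
    rw [div_pow, one_pow, Real.sq_sqrt hσ0.le, div_div_eq_mul_div, div_one,
      ← Real.sqrt_mul (by rw [sub_nonneg, div_le_one hσ0]; exact hσ1) σ]
    congr 1
    field_simp
  -- ρ formula
  have hrho : rhoF (fun t => Real.exp (H₀ * t)) (fun t => Real.log t / H₀) τ σ =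
      Real.arctan (Real.sqrt (σ - 1)) / H₀ := by
    simp only [rhoF]
    rw [J_rho hH hE hσ1]
    field_simp
  -- χ formula
  have hchi : chiF (fun t => Real.exp (H₀ * t)) (fun t => Real.log t / H₀) τ σ =
      Real.sqrt (σ - 1) / (H₀ * Real.exp (H₀ * τ)) := by
    simp only [chiF]
    rw [J_chi hH hE hσ1]
    ring
  -- derivative of a
  have hda : deriv (fun t : ℝ => Real.exp (H₀ * t)) τ = H₀ * Real.exp (H₀ * τ) := by
    have h : HasDerivAt (fun t : ℝ => Real.exp (H₀ * t)) (Real.exp (H₀ * τ) * (H₀ * 1)) τ :=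
      ((hasDerivAt_id τ).const_mul H₀).exp
    rw [h.deriv]; ring
  -- v_F formula
  have hvf : vFgen (fun t => Real.exp (H₀ * t)) (fun t => Real.log t / H₀) τ σ =
      Real.sqrt (σ - 1) / σ := by
    simp only [vFgen]
    rw [hda, J_rho hH hE hσ1, J_dd2 hH hE hσ1, J_dd1 hH hE hσ1]
    field_simp
    ring
  refine ⟨by rw [hrho, harctan], ?_, hchi, ?_, hvf, ?_, ?_⟩
  · rw [hrho]
    have : H₀ * (Real.arctan (Real.sqrt (σ - 1)) / H₀) = Real.arctan (Real.sqrt (σ - 1)) := by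
      field_simp
    rw [this]
    exact Real.arctan_lt_pi_div_two _
  · simp only [tF]
    rw [Real.log_div hE.ne' (ne_of_gt (Real.sqrt_pos.mpr hσ0)), Real.log_exp,
      Real.log_sqrt hσ0.le]
    field_simp
  · rw [hchi]
    have hx : H₀ * Real.exp (H₀ * τ) * (Real.sqrt (σ - 1) / (H₀ * Real.exp (H₀ * τ)))
        = Real.sqrt (σ - 1) := by field_simp
    rw [hx, Real.sq_sqrt hs10]
    congr 1
    ring
  · rw [hvf]
    rw [div_le_iff₀ hσ0]
    nlinarith [Real.sq_sqrt hs10, sq_nonneg (Real.sqrt (σ - 1) - 1), Real.sqrt_nonneg (σ - 1)]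
end
end
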